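/- Whitney decomposition identity: for s, t ∈ (0,1), the indicator function 1_{s<t} equals the sum over pairs of dyadic intervals I ∼ J of 1_I(t)·1_J(s), where I ∼ J means I and J are dyadic subintervals of [0,1] of the same length, not adjacent, with adjacent parents, and I lies to the right of J. -/

import Mathlib

/-- **Whitney decomposition of `{s < t}`.** For `s, t ∈ (0,1)` with
`s < t`, there is exactly one triple `(k, i, j)` with `k ≥ 1` indexing dyadic
intervals `J = [i2^{-k}, (i+1)2^{-k})` and `I = [j2^{-k}, (j+1)2^{-k})` of `[0,1]`
of the same length that are not adjacent (`i + 2 ≤ j`, so `I` lies to the right of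
`J`) but have adjacent parents (`j/2 = i/2 + 1`), such that `t ∈ I` and `s ∈ J`.
Hence `1_{s<t} = Σ_{I ∼ J} 1_I(t)·1_J(s)`. -/
theorem stmt7 (s t : ℝ) (hs : 0 < s) (hst : s < t) (ht : t < 1) :
    ∃! w : ℕ × ℕ × ℕ,
      1 ≤ w.1 ∧ w.2.2 < 2 ^ w.1 ∧
      w.2.1 + 2 ≤ w.2.2 ∧ w.2.2 / 2 = w.2.1 / 2 + 1 ∧
      s ∈ Set.Ico ((w.2.1 : ℝ) / 2 ^ w.1) ((w.2.1 + 1 : ℝ) / 2 ^ w.1) ∧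
      t ∈ Set.Ico ((w.2.2 : ℝ) / 2 ^ w.1) ((w.2.2 + 1 : ℝ) / 2 ^ w.1) := by
  have ht0 : 0 < t := hs.trans hst
  have hs1 : s < 1 := hst.trans ht
  set I : ℕ → ℕ := fun k => ⌊s * 2 ^ k⌋₊ with hIdef
  set J : ℕ → ℕ := fun k => ⌊t * 2 ^ k⌋₊ with hJdef
  have hpow : ∀ k : ℕ, (0:ℝ) < 2 ^ k := fun k => by positivity
  -- membership of the floor interval
  have hmem : ∀ (x : ℝ), 0 ≤ x → ∀ k,
      x ∈ Set.Ico ((⌊x * 2 ^ k⌋₊ : ℝ) / 2 ^ k) ((⌊x * 2 ^ k⌋₊ + 1 : ℝ) / 2 ^ k) := by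
    intro x hx k
    constructor
    · rw [div_le_iff₀ (hpow k)]
      exact Nat.floor_le (by positivity)
    · rw [lt_div_iff₀ (hpow k)]
      exact Nat.lt_floor_add_one _
  -- floor at generation k+1 divided by 2 is floor at generation k
  have hhalf : ∀ (x : ℝ), ∀ k, ⌊x * 2 ^ (k + 1)⌋₊ / 2 = ⌊x * 2 ^ k⌋₊ := by
    intro x k
    rw [← Nat.floor_div_natCast]
    congr 1
    push_cast
    ring
  have hhalfI : ∀ k, I (k + 1) / 2 = I k := fun k => hhalf s k
  have hhalfJ : ∀ k, J (k + 1) / 2 = J k := fun k => hhalf t k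
  have hboundI : ∀ k, 2 * I k ≤ I (k + 1) ∧ I (k + 1) < 2 * I k + 2 := by
    intro k
    have h1 := hhalfI k
    have h2 := Nat.div_add_mod (I (k + 1)) 2
    have h3 : I (k + 1) % 2 < 2 := Nat.mod_lt _ (by norm_num)
    omega
  have hboundJ : ∀ k, 2 * J k ≤ J (k + 1) ∧ J (k + 1) < 2 * J k + 2 := by
    intro k
    have h1 := hhalfJ k
    have h2 := Nat.div_add_mod (J (k + 1)) 2
    have h3 : J (k + 1) % 2 < 2 := Nat.mod_lt _ (by norm_num)
    omega
  have hmono : ∀ k, I k ≤ J k := by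
    intro k
    exact Nat.floor_mono (mul_le_mul_of_nonneg_right hst.le (hpow k).le)
  have hI0 : I 0 = 0 := by
    simp only [hIdef, pow_zero, mul_one]
    exact Nat.floor_eq_zero.mpr hs1
  have hJ0 : J 0 = 0 := by
    simp only [hJdef, pow_zero, mul_one]
    exact Nat.floor_eq_zero.mpr ht
  have hJlt : ∀ k, J k < 2 ^ k := by
    intro k
    have : t * 2 ^ k < ((2 ^ k : ℕ) : ℝ) := by
      push_cast
      nlinarith [hpow k]
    exact Nat.floor_lt (by positivity) |>.mpr this
  set P : ℕ → Prop := fun k => I k + 2 ≤ J k with hPdef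
  have hPstep : ∀ m, P m → P (m + 1) := by
    intro m hm
    have h1 := hboundI m
    have h2 := hboundJ m
    simp only [hPdef] at hm ⊢
    omega
  have hPmono : ∀ {a b : ℕ}, a ≤ b → P a → P b := by
    intro a b hab
    induction b, hab using Nat.le_induction with
    | base => exact id
    | succ n hn ih => exact fun h => hPstep n (ih h)
  have hex : ∃ k, P k := by
    obtain ⟨k, hk⟩ := pow_unbounded_of_one_lt (3 / (t - s)) (by norm_num : (1:ℝ) < 2)
    refine ⟨k, ?_⟩
    have hts : (0:ℝ) < t - s := by linarith
    have h3 : 3 < (t - s) * 2 ^ k := by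
      rw [div_lt_iff₀ hts] at hk
      linarith
    have hIle : (I k : ℝ) ≤ s * 2 ^ k := Nat.floor_le (by positivity)
    have hJgt : t * 2 ^ k < (J k : ℝ) + 1 := Nat.lt_floor_add_one _
    have : (I k : ℝ) + 2 < J k := by nlinarith
    have : I k + 2 < J k := by exact_mod_cast this
    simp only [hPdef]
    omega
  classical
  set K := Nat.find hex with hKdef
  have hPK : P K := Nat.find_spec hex
  have hK1 : 1 ≤ K := by
    rcases Nat.eq_zero_or_pos K with h | h
    · exfalso
      have := hPK
      rw [h] at this
      simp only [hPdef] at this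
      omega
    · exact h
  obtain ⟨m, hm⟩ : ∃ m, K = m + 1 := ⟨K - 1, by omega⟩
  have hPm : ¬ P m := Nat.find_min hex (by omega)
  have hJm : J m = I m + 1 := by
    have h1 := hboundI m
    have h2 := hboundJ m
    have h3 := hPK
    rw [hm] at h3
    have h4 := hmono m
    simp only [hPdef] at h3 hPm
    omega
  refine ⟨⟨K, I K, J K⟩, ⟨hK1, hJlt K, hPK, ?_, ?_, ?_⟩, ?_⟩
  · rw [hm, hhalfI m, hhalfJ m, hJm]
  · exact hmem s hs.le K
  · exact hmem t ht0.le K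
  · rintro ⟨k, i, j⟩ ⟨h1, h2, h3, h4, h5, h6⟩
    dsimp only at h1 h2 h3 h4 h5 h6
    -- identify i and j as the floors
    have hi : I k = i := by
      rw [hIdef]
      rw [Nat.floor_eq_iff (by positivity)]
      obtain ⟨h5a, h5b⟩ := h5
      constructor
      · rw [div_le_iff₀ (hpow k)] at h5a; linarith
      · rw [lt_div_iff₀ (hpow k)] at h5b; nlinarith [hpow k]
    have hj : J k = j := by
      rw [hJdef]
      rw [Nat.floor_eq_iff (by positivity)]
      obtain ⟨h6a, h6b⟩ := h6
      constructor
      · rw [div_le_iff₀ (hpow k)] at h6a; linarith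
      · rw [lt_div_iff₀ (hpow k)] at h6b; nlinarith [hpow k]
    have hPk : P k := by simp only [hPdef]; omega
    have hkK : K ≤ k := Nat.find_min' hex hPk
    obtain ⟨n, hn⟩ : ∃ n, k = n + 1 := ⟨k - 1, by omega⟩
    have hJn : J n = I n + 1 := by
      have := h4
      rw [← hi, ← hj, hn, hhalfI n, hhalfJ n] at this
      omega
    have hnP : ¬ P n := by simp only [hPdef]; omega
    have hkK' : k ≤ K := by
      by_contra hcon
      push_neg at hcon
      have : K ≤ n := by omega
      exact hnP (hPmono this hPK)
    have hk : k = K := le_antisymm hkK' hkK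
    refine Prod.ext hk (Prod.ext ?_ ?_) <;> simp only
    · rw [← hi, hk]
    · rw [← hj, hk]
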